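/- Let (a_i) be a bounded real sequence and ζ₀ < ζ₁ < ... a strictly increasing sequence of naturals with ζ₀ = 0 and gaps ζ_{n+1} − ζₙ ≤ N. Suppose the density d = lim_{n→∞} (1/n) Σ_{i=0}^{n-1} ξ_i exists and is positive, where ξ_i is the indicator of the range of ζ, and suppose lim_{n→∞} (1/n) Σ_{i=0}^{n-1} ξ_i a_i exists and equals L. Then lim_{m→∞} (1/m) Σ_{j=0}^{m-1} a_{ζ_j} exists and equals L / d. -/

import Mathlib

open Filter Finset
open scoped Classical

theorem subsequence_cesaro_limit_eq_div_density
    (N : ℕ) (a : ℕ → ℝ) (C : ℝ) (hbd : ∀ i, |a i| ≤ C)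
    (ζ : ℕ → ℕ) (hmono : StrictMono ζ) (hζ0 : ζ 0 = 0)
    (hgap : ∀ n, ζ (n + 1) - ζ n ≤ N)
    (ξ : ℕ → ℝ) (hξ : ∀ i, ξ i = if i ∈ Set.range ζ then 1 else 0)
    (d : ℝ) (hdpos : 0 < d)
    (hd : Tendsto (fun n : ℕ => (1 / (n : ℝ)) * ∑ i ∈ Finset.range n, ξ i) atTop (nhds d))
    (L : ℝ)
    (hL : Tendsto (fun n : ℕ => (1 / (n : ℝ)) * ∑ i ∈ Finset.range n, ξ i * a i) atTop (nhds L)) :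
    Tendsto (fun m : ℕ => (1 / (m : ℝ)) * ∑ j ∈ Finset.range m, a (ζ j)) atTop (nhds (L / d)) := by
  have hζtop : Tendsto ζ atTop atTop := hmono.tendsto_atTop
  have key : ∀ (f : ℕ → ℝ) (m : ℕ),
      ∑ i ∈ Finset.range (ζ m), ξ i * f i = ∑ j ∈ Finset.range m, f (ζ j) := by
    intro f m
    induction m with
    | zero => simp [hζ0]
    | succ m ih =>
      have h1 : ζ m ≤ ζ (m + 1) := (hmono (Nat.lt_succ_self m)).le
      rw [Finset.range_eq_Ico, ← Finset.sum_Ico_consecutive _ (Nat.zero_le (ζ m)) h1,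
        ← Finset.range_eq_Ico, ih, Finset.sum_range_succ]
      congr 1
      rw [Finset.sum_eq_single (ζ m)]
      · rw [hξ, if_pos ⟨m, rfl⟩, one_mul]
      · intro i hi hne
        rw [hξ, if_neg, zero_mul]
        rintro ⟨j, rfl⟩
        rw [Finset.mem_Ico] at hi
        have hjm : m ≤ j := hmono.le_iff_le.mp hi.1
        have hjm' : j < m + 1 := hmono.lt_iff_lt.mp hi.2
        have : j = m := by omega
        subst this
        exact hne rfl
      · intro h
        exact absurd (Finset.mem_Ico.mpr ⟨le_refl _, hmono (Nat.lt_succ_self m)⟩) h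
  have hnum : Tendsto (fun m : ℕ => (1 / (ζ m : ℝ)) * ∑ j ∈ Finset.range m, a (ζ j))
      atTop (nhds L) := by
    have := hL.comp hζtop
    simpa [Function.comp_def, key a] using this
  have hden : Tendsto (fun m : ℕ => (1 / (ζ m : ℝ)) * (m : ℝ)) atTop (nhds d) := by
    have := hd.comp hζtop
    have hk : ∀ m : ℕ, ∑ i ∈ Finset.range (ζ m), ξ i = (m : ℝ) := by
      intro m
      have := key (fun _ => 1) m
      simpa using this
    simpa [Function.comp_def, hk] using this
  have hdiv := hnum.div hden (ne_of_gt hdpos)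
  apply hdiv.congr'
  filter_upwards [eventually_ge_atTop 1] with m hm
  have hm0 : (m : ℝ) ≠ 0 := by positivity
  have hζm : (ζ m : ℝ) ≠ 0 := by
    have : 1 ≤ ζ m := le_trans hm (hmono.le_apply)
    positivity
  rw [Pi.div_apply]
  field_simp
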